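/- arXiv:1810.08176 — 2 statements merged into one kernel-verified Lean document; each statement's English description precedes it below -/
import Mathlib

section
/- Let p, q ≥ 2 be coprime integers and let k ≥ 1 be an integer, and set r := pqk − 1 (so that p, q, r are pairwise coprime and r ≥ 2). Then R(p, q, r) = 1, i.e., 2/(pqr) + Σ over the three entries m ∈ {p, q, r} of (2/m)·Σ_{j=1}^{m−1} cot(πj(pqr)/m²)·cot(πj/m)·sin²(πj/m) equals 1. -/
open Real

noncomputable section

/-- The summand of the Fintushel–Stern invariant attached to the multiplicity `m`:
`(2/m)·Σ_{j=1}^{m-1} cot(πjA/m²)·cot(πj/m)·sin²(πj/m)`, where `A` is the (real) product of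
the multiplicities. -/
def fsTerm (A : ℝ) (m : ℕ) : ℝ :=
  (2 / (m : ℝ)) * ∑ j ∈ Finset.Icc 1 (m - 1),
    Real.cot (π * j * A / (m : ℝ) ^ 2) * Real.cot (π * j / (m : ℝ)) *
      Real.sin (π * j / (m : ℝ)) ^ 2

lemma my_cot_add_pi (x : ℝ) : Real.cot (x + π) = Real.cot x := by
  rw [Real.cot_eq_cos_div_sin, Real.cot_eq_cos_div_sin, Real.sin_add_pi, Real.cos_add_pi,
    neg_div_neg_eq]

lemma my_cot_add_nat_mul_pi (x : ℝ) (n : ℕ) : Real.cot (x + n * π) = Real.cot x := by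
  induction n with
  | zero => simp
  | succ n ih =>
    have : x + ((n : ℝ) + 1) * π = (x + n * π) + π := by ring
    push_cast
    rw [this, my_cot_add_pi, ih]

lemma cot_congr_mod (m : ℕ) (hm : 0 < m) {a b : ℕ} (h : a ≡ b [MOD m]) :
    Real.cot (π * a / m) = Real.cot (π * b / m) := by
  have hm' : (m : ℝ) ≠ 0 := Nat.cast_ne_zero.mpr hm.ne'
  have key : ∀ a t : ℕ, Real.cot (π * ((a + m * t : ℕ) : ℝ) / m) = Real.cot (π * a / m) := by
    intro a t
    have : π * ((a + m * t : ℕ) : ℝ) / m = π * a / m + t * π := by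
      push_cast; field_simp
    rw [this, my_cot_add_nat_mul_pi]
  rcases le_total a b with hab | hab
  · obtain ⟨t, ht⟩ := (Nat.modEq_iff_dvd' hab).mp h
    have hb : b = a + m * t := by omega
    rw [hb, key]
  · obtain ⟨t, ht⟩ := (Nat.modEq_iff_dvd' hab).mp h.symm
    have ha : a = b + m * t := by omega
    rw [ha, key]

lemma sin_congr_mod (m : ℕ) (hm : 0 < m) {a b : ℕ} (h : a ≡ b [MOD m]) :
    Real.sin (2 * π * a / m) = Real.sin (2 * π * b / m) := by
  have hm' : (m : ℝ) ≠ 0 := Nat.cast_ne_zero.mpr hm.ne'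
  have key : ∀ a t : ℕ, Real.sin (2 * π * ((a + m * t : ℕ) : ℝ) / m) = Real.sin (2 * π * a / m) := by
    intro a t
    have : 2 * π * ((a + m * t : ℕ) : ℝ) / m = 2 * π * a / m + t * (2 * π) := by
      push_cast; field_simp
    rw [this, Real.sin_add_nat_mul_two_pi]
  rcases le_total a b with hab | hab
  · obtain ⟨t, ht⟩ := (Nat.modEq_iff_dvd' hab).mp h
    have hb : b = a + m * t := by omega
    rw [hb, key]
  · obtain ⟨t, ht⟩ := (Nat.modEq_iff_dvd' hab).mp h.symm
    have ha : a = b + m * t := by omega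
    rw [ha, key]

lemma sum_cos_eq_zero {m t : ℕ} (hm : 0 < m) (ht : ¬ m ∣ t) :
    ∑ j ∈ Finset.range m, Real.cos (2 * π * j * t / m) = 0 := by
  have hm' : (m : ℂ) ≠ 0 := Nat.cast_ne_zero.mpr hm.ne'
  set ζ : ℂ := Complex.exp (2 * π * Complex.I * t / m) with hζ
  have hζ1 : ζ ≠ 1 := by
    intro h
    rw [hζ, Complex.exp_eq_one_iff] at h
    obtain ⟨n, hn⟩ := h
    apply ht
    have hπ : (π : ℂ) ≠ 0 := Complex.ofReal_ne_zero.mpr Real.pi_ne_zero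
    have hI : Complex.I ≠ 0 := Complex.I_ne_zero
    have : (t : ℂ) = n * m := by
      field_simp at hn
      apply mul_left_cancel₀ (show (2 * (π:ℂ) * Complex.I) ≠ 0 by
        simp [hπ, hI, two_ne_zero])
      linear_combination (2 * (π:ℂ) * Complex.I) * hn
    have h3 : (t : ℤ) = n * m := by exact_mod_cast this
    exact Int.natCast_dvd_natCast.mp ⟨n, by rw [h3]; ring⟩
  have hpow : ζ ^ m = 1 := by
    rw [hζ, ← Complex.exp_nat_mul]
    have : (m : ℂ) * (2 * π * Complex.I * t / m) = (t : ℤ) * (2 * π * Complex.I) := by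
      rw [mul_comm, div_mul_cancel₀ _ hm']; push_cast; ring
    rw [this, Complex.exp_int_mul_two_pi_mul_I]
  have hsum : ∑ j ∈ Finset.range m, ζ ^ j = 0 := by
    rw [geom_sum_eq hζ1, hpow]
    simp
  have hre : ∑ j ∈ Finset.range m, Real.cos (2 * π * j * t / m)
      = (∑ j ∈ Finset.range m, ζ ^ j).re := by
    rw [Complex.re_sum]
    refine Finset.sum_congr rfl fun j _ => ?_
    rw [hζ, ← Complex.exp_nat_mul]
    rw [show (j : ℂ) * (2 * π * Complex.I * t / m) = ((2 * π * j * t / m : ℝ) : ℂ) * Complex.I by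
      push_cast; field_simp]
    exact (Complex.exp_ofReal_mul_I_re _).symm
  rw [hre, hsum, Complex.zero_re]

lemma cot_mul_sin_two_mul (θ : ℝ) (hθ : Real.sin θ ≠ 0) (n : ℕ) :
    Real.cot θ * Real.sin (2 * n * θ) =
      ∑ t ∈ Finset.range n, (Real.cos (2 * t * θ) + Real.cos (2 * (t + 1) * θ)) := by
  induction n with
  | zero => simp
  | succ n ih =>
    rw [Finset.sum_range_succ, ← ih]
    have harg : (2 : ℝ) * (n + 1) * θ = 2 * n * θ + 2 * θ := by ring
    push_cast
    rw [harg, Real.cot_eq_cos_div_sin, Real.sin_add, Real.cos_add,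
      Real.sin_two_mul, Real.cos_two_mul]
    field_simp
    linear_combination (2 * Real.cos θ * Real.sin (2 * (n:ℝ) * θ)) * Real.sin_sq_add_cos_sq θ

lemma icc_eq_sdiff (m : ℕ) (hm : 0 < m) :
    Finset.Icc 1 (m - 1) = Finset.range m \ {0} := by
  ext j
  simp only [Finset.mem_Icc, Finset.mem_sdiff, Finset.mem_range, Finset.mem_singleton]
  omega

lemma inner_cos_sum (m t : ℕ) (hm : 0 < m) (ht : 0 < t) (htm : t < m) :
    ∑ j ∈ Finset.Icc 1 (m - 1), Real.cos (2 * π * j * t / m) = -1 := by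
  rw [icc_eq_sdiff m hm, Finset.sum_sdiff_eq_sub (by
    simp [Finset.singleton_subset_iff, Finset.mem_range, hm])]
  rw [sum_cos_eq_zero hm (fun hdvd => absurd (Nat.le_of_dvd ht hdvd) (by omega))]
  norm_num

lemma inner_cos_sum_zero (m : ℕ) (hm : 0 < m) :
    ∑ j ∈ Finset.Icc 1 (m - 1), Real.cos (2 * π * j * 0 / m) = m - 1 := by
  have : ∀ j ∈ Finset.Icc 1 (m-1), Real.cos (2 * π * (j:ℝ) * 0 / m) = 1 := fun j _ => by
    norm_num
  rw [Finset.sum_congr rfl this, Finset.sum_const, Nat.card_Icc, nsmul_eq_mul, mul_one]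
  have h1 : m - 1 + 1 - 1 = m - 1 := by omega
  rw [h1, Nat.cast_sub hm]
  ring

lemma sin_pos_of_icc {m j : ℕ} (hj : j ∈ Finset.Icc 1 (m - 1)) (hm : 2 ≤ m) :
    Real.sin (π * j / m) ≠ 0 := by
  simp only [Finset.mem_Icc] at hj
  have hm' : (0:ℝ) < m := by positivity
  apply ne_of_gt
  apply Real.sin_pos_of_pos_of_lt_pi
  · have : (0:ℝ) < j := by exact_mod_cast (by omega : 0 < j)
    positivity
  · rw [div_lt_iff₀ hm']
    have : (j : ℝ) < m := by exact_mod_cast (by omega : j < m)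
    nlinarith [Real.pi_pos]

lemma cot_sum (m n : ℕ) (hm : 2 ≤ m) (hn : 0 < n) (hnm : n < m) :
    ∑ j ∈ Finset.Icc 1 (m - 1), Real.cot (π * j / m) * Real.sin (2 * π * j * n / m)
      = m - 2 * n := by
  have hm0 : (0:ℕ) < m := by omega
  have hmr : (m : ℝ) ≠ 0 := by positivity
  have step1 : ∀ j ∈ Finset.Icc 1 (m - 1),
      Real.cot (π * j / m) * Real.sin (2 * π * j * n / m)
        = ∑ t ∈ Finset.range n, (Real.cos (2 * π * j * t / m) + Real.cos (2 * π * j * (t+1) / m)) := by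
    intro j hj
    have h1 : 2 * π * (j:ℝ) * n / m = 2 * n * (π * j / m) := by field_simp
    rw [h1, cot_mul_sin_two_mul _ (sin_pos_of_icc hj hm)]
    refine Finset.sum_congr rfl fun t _ => ?_
    congr 1
    · congr 1; field_simp
    · congr 1; field_simp
  rw [Finset.sum_congr rfl step1, Finset.sum_comm]
  have step2 : ∀ t ∈ Finset.range n,
      ∑ j ∈ Finset.Icc 1 (m - 1),
        (Real.cos (2 * π * j * t / m) + Real.cos (2 * π * j * (t+1) / m))
      = (if t = 0 then (m:ℝ) else 0) + (-2) := by
    intro t htn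
    simp only [Finset.mem_range] at htn
    rw [Finset.sum_add_distrib]
    have hsnd : ∑ j ∈ Finset.Icc 1 (m - 1), Real.cos (2 * π * (j:ℝ) * ((t:ℝ)+1) / m) = -1 := by
      have harg : ∀ j : ℕ, 2 * π * (j:ℝ) * ((t:ℝ)+1) / m = 2 * π * j * ((t+1 : ℕ):ℝ) / m := by
        intro j; push_cast; ring
      rw [Finset.sum_congr rfl (fun j _ => by rw [harg j])]
      exact inner_cos_sum m (t+1) hm0 (by omega) (by omega)
    by_cases h0 : t = 0
    · subst h0
      rw [if_pos rfl, hsnd]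
      have := inner_cos_sum_zero m hm0
      push_cast at this ⊢
      rw [this]; ring
    · rw [if_neg h0, hsnd, inner_cos_sum m t hm0 (by omega) (by omega)]
      ring
  rw [Finset.sum_congr rfl step2, Finset.sum_add_distrib,
    Finset.sum_ite_eq' (Finset.range n) 0 (fun _ => (m:ℝ)),
    if_pos (Finset.mem_range.mpr hn), Finset.sum_const, Finset.card_range]
  ring

lemma fs_sum_eval (m c : ℕ) (hm : 2 ≤ m) (hc : Nat.Coprime c m) :
    (2 / (m:ℝ)) * ∑ j ∈ Finset.Icc 1 (m - 1),
      Real.cot (π * j * c / m) * Real.cot (π * j / m) * Real.sin (π * j / m) ^ 2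
    = 1 - 2 * ((((c : ℕ) : ZMod m))⁻¹.val : ℝ) / m := by
  haveI : NeZero m := ⟨by omega⟩
  have hm0 : 0 < m := by omega
  have hmr : (m : ℝ) ≠ 0 := by positivity
  set d : ℕ := (((c : ℕ) : ZMod m))⁻¹.val with hd
  have hu : ((c : ZMod m)) * ((c : ZMod m))⁻¹ = 1 := ZMod.coe_mul_inv_eq_one c hc
  have hdcast : ((d : ℕ) : ZMod m) = ((c : ZMod m))⁻¹ := ZMod.natCast_zmod_val _
  have hcd : c * d ≡ 1 [MOD m] := by
    have : ((c * d : ℕ) : ZMod m) = ((1 : ℕ) : ZMod m) := by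
      push_cast
      rw [hdcast, hu]
    exact (ZMod.natCast_eq_natCast_iff _ _ _).mp this
  have hdm : d < m := ZMod.val_lt _
  have hd0 : 0 < d := by
    rcases Nat.eq_zero_or_pos d with h | h
    · exfalso
      have h2 : ((c : ZMod m))⁻¹ = 0 := by rw [← hdcast, h, Nat.cast_zero]
      haveI : Fact (1 < m) := ⟨by omega⟩
      rw [h2, mul_zero] at hu
      exact zero_ne_one hu
    · exact h
  have hccop : Nat.Coprime m c := hc.symm
  have hdcop : Nat.Coprime m d := by
    have h1 : ((ZMod.unitOfCoprime c hc : (ZMod m)ˣ) : ZMod m) = (c : ZMod m) :=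
      ZMod.coe_unitOfCoprime c hc
    have h2 : ((c : ZMod m))⁻¹ = (((ZMod.unitOfCoprime c hc)⁻¹ : (ZMod m)ˣ) : ZMod m) := by
      rw [← h1, ZMod.inv_coe_unit]
    rw [hd, h2]
    exact (ZMod.val_coe_unit_coprime _).symm
  -- pointwise: cot·cot·sin² = ½·cot·sin(2θ)
  have point : ∀ j ∈ Finset.Icc 1 (m - 1),
      Real.cot (π * j * c / m) * Real.cot (π * j / m) * Real.sin (π * j / m) ^ 2
      = (1/2) * (Real.cot (π * ((j * c : ℕ) : ℝ) / m) * Real.sin (2 * π * j / m)) := by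
    intro j hj
    have hs := sin_pos_of_icc hj hm
    have h1 : π * (j:ℝ) * c / m = π * ((j * c : ℕ) : ℝ) / m := by push_cast; ring
    have h2 : Real.cot (π * j / m) * Real.sin (π * j / m) ^ 2
        = (1/2) * Real.sin (2 * π * j / m) := by
      rw [Real.cot_eq_cos_div_sin,
        show 2 * π * (j:ℝ) / m = 2 * (π * j / m) by ring, Real.sin_two_mul]
      field_simp
    rw [h1, mul_assoc, h2]
    ring
  rw [Finset.sum_congr rfl point, ← Finset.mul_sum]
  -- reindex the sum
  have mem_map : ∀ (e : ℕ), Nat.Coprime m e → ∀ a ∈ Finset.Icc 1 (m - 1),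
      a * e % m ∈ Finset.Icc 1 (m - 1) := by
    intro e he a ha
    simp only [Finset.mem_Icc] at ha ⊢
    have hlt : a * e % m < m := Nat.mod_lt _ hm0
    have hne : a * e % m ≠ 0 := by
      intro h0
      have hdvd : m ∣ a * e := Nat.dvd_of_mod_eq_zero h0
      have : m ∣ a := he.dvd_of_dvd_mul_right hdvd
      have := Nat.le_of_dvd (by omega) this
      omega
    omega
  have inv_comp : ∀ (e f : ℕ), e * f ≡ 1 [MOD m] → ∀ a ∈ Finset.Icc 1 (m - 1),
      (a * e % m) * f % m = a := by
    intro e f hef a ha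
    simp only [Finset.mem_Icc] at ha
    have h1 : (a * e % m) * f % m = a * e * f % m := Nat.mod_mul_mod _ _ _
    have h2 : a * e * f % m = a % m := by
      have := hef.mul_left a
      simpa [Nat.ModEq, mul_assoc] using this
    rw [h1, h2, Nat.mod_eq_of_lt (by omega)]
  have reindex : ∑ j ∈ Finset.Icc 1 (m - 1),
      Real.cot (π * ((j * c : ℕ) : ℝ) / m) * Real.sin (2 * π * j / m)
      = ∑ j ∈ Finset.Icc 1 (m - 1), Real.cot (π * j / m) * Real.sin (2 * π * j * d / m) := by
    refine Finset.sum_nbij' (fun a => a * c % m) (fun b => b * d % m)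
      (mem_map c hccop) (mem_map d hdcop) (inv_comp c d hcd) (inv_comp d c ?_) ?_
    · rw [mul_comm]; exact hcd
    · intro a ha
      simp only [Finset.mem_Icc] at ha
      have hcot : Real.cot (π * ((a * c : ℕ) : ℝ) / m)
          = Real.cot (π * ((a * c % m : ℕ) : ℝ) / m) :=
        cot_congr_mod m hm0 (Nat.mod_modEq (a * c) m).symm
      have hsin : Real.sin (2 * π * (a:ℝ) / m)
          = Real.sin (2 * π * ((a * c % m : ℕ):ℝ) * d / m) := by
        have harg : 2 * π * ((a * c % m : ℕ):ℝ) * d / m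
            = 2 * π * (((a * c % m) * d : ℕ):ℝ) / m := by push_cast; ring
        rw [harg]
        refine sin_congr_mod m hm0 ?_
        have e1 : a = a * c % m * d % m := (inv_comp c d hcd a (Finset.mem_Icc.mpr ha)).symm
        calc a ≡ a * c % m * d % m [MOD m] := by rw [← e1]
          _ ≡ a * c % m * d [MOD m] := Nat.mod_modEq _ m
      rw [hcot, hsin]
  rw [reindex, cot_sum m d hm hd0 hdm]
  field_simp

lemma fsTerm_eq (m c : ℕ) (hm : 2 ≤ m) (hc : Nat.Coprime c m) :
    fsTerm ((m * c : ℕ) : ℝ) m = 1 - 2 * ((((c : ℕ) : ZMod m))⁻¹.val : ℝ) / m := by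
  rw [fsTerm, ← fs_sum_eval m c hm hc]
  congr 1
  refine Finset.sum_congr rfl fun j _ => ?_
  have hmr : (m:ℝ) ≠ 0 := by positivity
  have harg : π * (j:ℝ) * ((m * c : ℕ):ℝ) / (m:ℝ)^2 = π * j * c / m := by
    push_cast; field_simp
  rw [harg]

/-- For coprime integers `p, q ≥ 2` and `k ≥ 1`, setting `r := pqk - 1` (so that `p`, `q`, `r`
are pairwise coprime and `r ≥ 2`), one has `R(p, q, r) = 1`. -/
theorem stmt_16 (p q k : ℕ) (hp : 2 ≤ p) (hq : 2 ≤ q) (hpq : Nat.Coprime p q)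
    (hk : 1 ≤ k) (r : ℕ) (hr : r = p * q * k - 1) :
    2 / ((p * q * r : ℕ) : ℝ) +
      fsTerm ((p * q * r : ℕ) : ℝ) p +
      fsTerm ((p * q * r : ℕ) : ℝ) q +
      fsTerm ((p * q * r : ℕ) : ℝ) r = 1 := by
  have hpqk4 : 4 ≤ p * q * k := by
    calc 4 = 2 * 2 * 1 := by norm_num
    _ ≤ p * q * k := Nat.mul_le_mul (Nat.mul_le_mul hp hq) hk
  have hr1 : r + 1 = p * q * k := by omega
  have hrge : 2 ≤ r := by omega
  haveI : NeZero p := ⟨by omega⟩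
  haveI : NeZero q := ⟨by omega⟩
  haveI : NeZero r := ⟨by omega⟩
  -- coprimality facts
  have cop_rp : Nat.Coprime r p := by
    have h1 : Nat.gcd r p ∣ r + 1 := (Nat.gcd_dvd_right r p).trans (by
      rw [hr1]; exact ⟨q * k, by ring⟩)
    have h2 : Nat.gcd r p ∣ 1 := by simpa using Nat.dvd_sub h1 (Nat.gcd_dvd_left r p)
    exact Nat.dvd_one.mp h2
  have cop_rq : Nat.Coprime r q := by
    have h1 : Nat.gcd r q ∣ r + 1 := (Nat.gcd_dvd_right r q).trans (by
      rw [hr1]; exact ⟨p * k, by ring⟩)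
    have h2 : Nat.gcd r q ∣ 1 := by simpa using Nat.dvd_sub h1 (Nat.gcd_dvd_left r q)
    exact Nat.dvd_one.mp h2
  have cop_qr_p : Nat.Coprime (q * r) p := Nat.Coprime.mul hpq.symm cop_rp
  have cop_pr_q : Nat.Coprime (p * r) q := Nat.Coprime.mul hpq cop_rq
  have cop_pq_r : Nat.Coprime (p * q) r := Nat.Coprime.mul cop_rp.symm cop_rq.symm
  -- the three inverses
  set dp : ℕ := (((q * r : ℕ) : ZMod p))⁻¹.val with hdp
  set dq : ℕ := (((p * r : ℕ) : ZMod q))⁻¹.val with hdq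
  -- rewrite the three fsTerms
  have e1 : fsTerm ((p * q * r : ℕ) : ℝ) p = 1 - 2 * (dp : ℝ) / p := by
    rw [show p * q * r = p * (q * r) by ring]
    exact fsTerm_eq p (q * r) hp cop_qr_p
  have e2 : fsTerm ((p * q * r : ℕ) : ℝ) q = 1 - 2 * (dq : ℝ) / q := by
    rw [show p * q * r = q * (p * r) by ring]
    exact fsTerm_eq q (p * r) hq cop_pr_q
  have e3 : fsTerm ((p * q * r : ℕ) : ℝ) r = 1 - 2 * (k : ℝ) / r := by
    rw [show p * q * r = r * (p * q) by ring]
    rw [fsTerm_eq r (p * q) hrge cop_pq_r]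
    have hkr : k < r := by
      have h4 : 4 ≤ p * q := by have := Nat.mul_le_mul hp hq; omega
      have h5 : 4 * k ≤ p * q * k := Nat.mul_le_mul_right k h4
      omega
    have hinv : (((p * q : ℕ) : ZMod r))⁻¹ = ((k : ℕ) : ZMod r) := by
      apply ZMod.inv_eq_of_mul_eq_one
      have h0 : ((p * q * k : ℕ) : ZMod r) = 1 := by
        rw [← hr1]; push_cast; simp
      push_cast at h0 ⊢
      linear_combination h0
    rw [hinv, ZMod.val_cast_of_lt hkr]
  rw [e1, e2, e3]
  -- facts about dp, dq
  have hdp_lt : dp < p := ZMod.val_lt _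
  have hdq_lt : dq < q := ZMod.val_lt _
  have key_p : p ∣ q * dp + 1 := by
    set X : ZMod p := (((q * r : ℕ) : ZMod p))⁻¹ with hX
    have hinv : ((q * r : ℕ) : ZMod p) * X = 1 := ZMod.coe_mul_inv_eq_one _ cop_qr_p
    have hrp : ((r : ℕ) : ZMod p) = -1 := by
      have h0 : ((r + 1 : ℕ) : ZMod p) = ((p * (q * k) : ℕ) : ZMod p) := by
        rw [show p * (q * k) = p * q * k by ring, hr1]
      push_cast at h0
      rw [ZMod.natCast_self, zero_mul] at h0
      linear_combination h0
    have : ((q * dp + 1 : ℕ) : ZMod p) = 0 := by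
      push_cast
      rw [hdp, ZMod.natCast_zmod_val]
      push_cast at hinv
      rw [hrp] at hinv
      linear_combination -hinv
    exact (ZMod.natCast_eq_zero_iff _ _).mp this
  have key_q : q ∣ p * dq + 1 := by
    set Y : ZMod q := (((p * r : ℕ) : ZMod q))⁻¹ with hY
    have hinv : ((p * r : ℕ) : ZMod q) * Y = 1 := ZMod.coe_mul_inv_eq_one _ cop_pr_q
    have hrq : ((r : ℕ) : ZMod q) = -1 := by
      have h0 : ((r + 1 : ℕ) : ZMod q) = ((q * (p * k) : ℕ) : ZMod q) := by
        rw [show q * (p * k) = p * q * k by ring, hr1]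
      push_cast at h0
      rw [ZMod.natCast_self, zero_mul] at h0
      linear_combination h0
    have : ((p * dq + 1 : ℕ) : ZMod q) = 0 := by
      push_cast
      rw [hdq, ZMod.natCast_zmod_val]
      push_cast at hinv
      rw [hrq] at hinv
      linear_combination -hinv
    exact (ZMod.natCast_eq_zero_iff _ _).mp this
  -- S + 1 = p * q
  have hS : q * dp + p * dq + 1 = p * q := by
    have hdvd_p : p ∣ q * dp + p * dq + 1 := by
      obtain ⟨u, hu⟩ := key_p
      exact ⟨u + dq, by rw [Nat.mul_add, ← hu]; ring⟩
    have hdvd_q : q ∣ q * dp + p * dq + 1 := by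
      obtain ⟨u, hu⟩ := key_q
      exact ⟨dp + u, by rw [Nat.mul_add, ← hu]; ring⟩
    have hdvd : p * q ∣ q * dp + p * dq + 1 := Nat.Coprime.mul_dvd_of_dvd_of_dvd hpq hdvd_p hdvd_q
    have hub : q * dp + p * dq + 1 < 2 * (p * q) := by
      have b1 : q * (dp + 1) ≤ q * p := Nat.mul_le_mul_left q hdp_lt
      have b2 : p * (dq + 1) ≤ p * q := Nat.mul_le_mul_left p hdq_lt
      nlinarith
    have hpos : 0 < q * dp + p * dq + 1 := by omega
    exact (Nat.eq_of_dvd_of_lt_two_mul (by omega) hdvd hub)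
  -- the main numeric identity
  have key : dp * (q * r) + dq * (p * r) + k * (p * q) = p * q * r + 1 := by
    calc dp * (q * r) + dq * (p * r) + k * (p * q)
        = r * (q * dp + p * dq) + p * q * k := by ring
      _ = r * (q * dp + p * dq) + (r + 1) := by rw [hr1]
      _ = r * (q * dp + p * dq + 1) + 1 := by ring
      _ = r * (p * q) + 1 := by rw [hS]
      _ = p * q * r + 1 := by ring
  have keyR : (dp : ℝ) * (q * r) + dq * (p * r) + k * (p * q) = p * q * r + 1 := by
    exact_mod_cast key
  have hp0 : (p : ℝ) ≠ 0 := by positivity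
  have hq0 : (q : ℝ) ≠ 0 := by positivity
  have hr0 : (r : ℝ) ≠ 0 := by positivity
  push_cast
  field_simp
  linear_combination (-2) * keyR
end
end

section
/- Let p, q ≥ 2 be coprime integers and let k ≥ 1 be an integer, and set r := pqk + 1 (so that p, q, r are pairwise coprime and r ≥ 2). Then R(p, q, r) = −1, i.e., 2/(pqr) + Σ over the three entries m ∈ {p, q, r} of (2/m)·Σ_{j=1}^{m−1} cot(πj(pqr)/m²)·cot(πj/m)·sin²(πj/m) equals −1. -/
open Real

noncomputable section

lemma cot_add_int_mul_pi' (x : ℝ) (n : ℤ) : Real.cot (x + n * π) = Real.cot x := by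
  rw [Real.cot_eq_cos_div_sin, Real.cot_eq_cos_div_sin, Real.cos_add_int_mul_pi,
    Real.sin_add_int_mul_pi]
  exact mul_div_mul_left _ _ (by positivity)

lemma sum_cos_range' (m : ℕ) (hm : 1 ≤ m) (c : ℕ) :
    ∑ j ∈ Finset.range m, Real.cos (2 * π * j * c / m) =
      if m ∣ c then (m : ℝ) else 0 := by
  have hm0 : (m : ℝ) ≠ 0 := Nat.cast_ne_zero.mpr (by omega)
  have hm0' : (m : ℂ) ≠ 0 := Nat.cast_ne_zero.mpr (by omega)
  have key : ∀ j : ℕ, Real.cos (2 * π * j * c / m) =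
      (Complex.exp (2 * π * Complex.I * c / m) ^ j).re := by
    intro j
    rw [← Complex.exp_nat_mul]
    rw [show (j : ℂ) * (2 * π * Complex.I * c / m) = ((2 * π * j * c / m : ℝ) : ℂ) * Complex.I by
      push_cast; field_simp]
    rw [Complex.exp_ofReal_mul_I_re]
  simp only [key]
  rw [← Complex.re_sum]
  by_cases hdvd : m ∣ c
  · have h1 : Complex.exp (2 * π * Complex.I * c / m) = 1 := by
      obtain ⟨d, hd⟩ := hdvd
      rw [show (2 * π * Complex.I * c / m : ℂ) = (d : ℤ) * (2 * π * Complex.I) by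
        rw [hd]; push_cast; field_simp]
      exact Complex.exp_int_mul_two_pi_mul_I d
    simp [h1, hdvd]
  · have hz : Complex.exp (2 * π * Complex.I * c / m) ≠ 1 := by
      rw [Ne, Complex.exp_eq_one_iff]
      rintro ⟨n, hn⟩
      apply hdvd
      have hπ : (π : ℂ) ≠ 0 := Complex.ofReal_ne_zero.mpr Real.pi_ne_zero
      have hne : (2 * π * Complex.I : ℂ) ≠ 0 := by
        simp [Real.pi_ne_zero, Complex.I_ne_zero, Complex.ofReal_ne_zero]
      have hmc : (c : ℂ) = ((n * m : ℤ) : ℂ) := by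
        have h2 : (2 * π * Complex.I * c / m : ℂ) * m = ((n : ℂ) * (2 * π * Complex.I)) * m := by
          rw [hn]
        field_simp at h2
        refine mul_left_cancel₀ hne ?_
        push_cast
        linear_combination (2 * π * Complex.I) * h2
      have hcz : (c : ℤ) = n * m := by exact_mod_cast hmc
      have : (m : ℤ) ∣ (c : ℤ) := ⟨n, by linear_combination hcz⟩
      exact_mod_cast this
    have hpow : Complex.exp (2 * π * Complex.I * c / m) ^ m = 1 := by
      rw [← Complex.exp_nat_mul,
        show (m : ℂ) * (2 * π * Complex.I * c / m) = (c : ℤ) * (2 * π * Complex.I) by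
          push_cast; field_simp]
      exact Complex.exp_int_mul_two_pi_mul_I c
    rw [geom_sum_eq hz, hpow]
    simp [hdvd]

lemma sum_cos_Icc' (m : ℕ) (hm : 2 ≤ m) (c : ℕ) :
    ∑ j ∈ Finset.Icc 1 (m - 1), Real.cos (2 * π * j * c / m) =
      (if m ∣ c then (m : ℝ) else 0) - 1 := by
  have h := sum_cos_range' m (by omega) c
  have hins : Finset.range m = insert 0 (Finset.Icc 1 (m - 1)) := by
    ext x; simp [Finset.mem_range, Finset.mem_Icc]; omega
  rw [hins, Finset.sum_insert (by simp)] at h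
  simp only [Nat.cast_zero, mul_zero, zero_mul, zero_div, Real.cos_zero] at h
  linarith [h]

lemma sin_pos_of_Icc' (m j : ℕ) (hm : 2 ≤ m) (hj1 : 1 ≤ j) (hj2 : j ≤ m - 1) :
    0 < Real.sin (π * j / m) := by
  apply Real.sin_pos_of_pos_of_lt_pi
  · have : (0:ℝ) < m := by positivity
    positivity
  · rw [div_lt_iff₀ (by positivity)]
    have hj : (j : ℝ) < m := by exact_mod_cast (by omega : j < m)
    nlinarith [Real.pi_pos]

lemma step_id' (θ φ : ℝ) (hθ : Real.sin θ ≠ 0) :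
    Real.cot θ * Real.sin (φ + 2 * θ) =
      Real.cot θ * Real.sin φ + (Real.cos (φ + 2 * θ) + Real.cos φ) := by
  rw [Real.cot_eq_cos_div_sin, Real.sin_add, Real.cos_add, Real.sin_two_mul, Real.cos_two_mul]
  have h := Real.sin_sq_add_cos_sq θ
  field_simp
  linear_combination (2 * Real.cos θ * Real.sin φ) * h

lemma D_aux' (m : ℕ) (hm : 2 ≤ m) (b : ℕ) (hb : b ≤ m - 1) :
    ∑ j ∈ Finset.Icc 1 (m - 1), Real.cot (π * j / m) * Real.sin (2 * π * j * b / m) =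
      if b = 0 then 0 else (m : ℝ) - 2 * b := by
  induction b with
  | zero => simp
  | succ b ih =>
    have hb' : b ≤ m - 1 := by omega
    have hm0 : (m : ℝ) ≠ 0 := Nat.cast_ne_zero.mpr (by omega)
    have key : ∀ j ∈ Finset.Icc 1 (m - 1),
        Real.cot (π * j / m) * Real.sin (2 * π * j * (b + 1 : ℕ) / m) =
          Real.cot (π * j / m) * Real.sin (2 * π * j * b / m) +
            (Real.cos (2 * π * j * (b + 1 : ℕ) / m) + Real.cos (2 * π * j * b / m)) := by
      intro j hj
      simp only [Finset.mem_Icc] at hj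
      have hs := sin_pos_of_Icc' m j hm hj.1 hj.2
      have harg : 2 * π * j * (b + 1 : ℕ) / m = 2 * π * j * b / m + 2 * (π * j / m) := by
        push_cast; field_simp
      rw [harg]
      exact step_id' _ _ (ne_of_gt hs)
    rw [Finset.sum_congr rfl key, Finset.sum_add_distrib, ih hb', Finset.sum_add_distrib,
      sum_cos_Icc' m hm, sum_cos_Icc' m hm]
    have h1 : ¬ m ∣ (b + 1) := by
      intro h; have := Nat.le_of_dvd (by omega) h; omega
    rcases Nat.eq_zero_or_pos b with rfl | hbpos
    · simp [h1, Nat.dvd_zero]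
      ring
    · have h2 : ¬ m ∣ b := by
        intro h; have := Nat.le_of_dvd (by omega) h; omega
      simp only [h1, h2, if_false, Nat.pos_iff_ne_zero.mp hbpos, if_neg]
      push_cast
      have : b ≠ 0 := by omega
      simp [this]
      ring

lemma sum_cot_reindex' (m a b : ℕ) (hm : 2 ≤ m) (hb1 : 1 ≤ b) (hb2 : b ≤ m - 1)
    (hab : a * b ≡ 1 [MOD m]) :
    ∑ j ∈ Finset.Icc 1 (m - 1), Real.cot (π * (j * a) / m) * Real.sin (2 * π * j / m) =
      (m : ℝ) - 2 * b := by
  have hm0 : (m : ℝ) ≠ 0 := Nat.cast_ne_zero.mpr (by omega)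
  have hmod : ∀ j, b * (a * j % m) ≡ j [MOD m] := by
    intro j
    calc b * (a * j % m) ≡ b * (a * j) [MOD m] := (Nat.mod_modEq _ m).mul_left b
      _ = (a * b) * j := by ring
      _ ≡ 1 * j [MOD m] := hab.mul_right j
      _ = j := by ring
  have hmod' : ∀ j, a * (b * j % m) ≡ j [MOD m] := by
    intro j
    calc a * (b * j % m) ≡ a * (b * j) [MOD m] := (Nat.mod_modEq _ m).mul_left a
      _ = (a * b) * j := by ring
      _ ≡ 1 * j [MOD m] := hab.mul_right j
      _ = j := by ring
  have hi : ∀ j ∈ Finset.Icc 1 (m - 1), a * j % m ∈ Finset.Icc 1 (m - 1) := by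
    intro j hj
    simp only [Finset.mem_Icc] at hj ⊢
    have hlt : a * j % m < m := Nat.mod_lt _ (by omega)
    have hne : a * j % m ≠ 0 := by
      intro h0
      have := hmod (j)
      rw [h0, mul_zero] at this
      have : j % m = 0 % m := this.symm
      rw [Nat.zero_mod, Nat.mod_eq_of_lt (by omega)] at this
      omega
    omega
  have hj' : ∀ j ∈ Finset.Icc 1 (m - 1), b * j % m ∈ Finset.Icc 1 (m - 1) := by
    intro j hj
    simp only [Finset.mem_Icc] at hj ⊢
    have hlt : b * j % m < m := Nat.mod_lt _ (by omega)
    have hne : b * j % m ≠ 0 := by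
      intro h0
      have := hmod' (j)
      rw [h0, mul_zero] at this
      have : j % m = 0 % m := this.symm
      rw [Nat.zero_mod, Nat.mod_eq_of_lt (by omega)] at this
      omega
    omega
  rw [show (m : ℝ) - 2 * b = if b = 0 then 0 else (m : ℝ) - 2 * b by
      simp [Nat.pos_iff_ne_zero.mp hb1],
    ← D_aux' m hm b hb2]
  refine Finset.sum_nbij' (fun j => a * j % m) (fun j => b * j % m) hi hj' ?_ ?_ ?_
  · intro j hj
    simp only [Finset.mem_Icc] at hj
    have heq : b * (a * j % m) % m = j % m := hmod j
    rwa [Nat.mod_eq_of_lt (by omega : j < m)] at heq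
  · intro j hj
    simp only [Finset.mem_Icc] at hj
    have heq : a * (b * j % m) % m = j % m := hmod' j
    rwa [Nat.mod_eq_of_lt (by omega : j < m)] at heq
  · intro j hj
    simp only [Finset.mem_Icc] at hj
    have hjm : j < m := by omega
    set i := a * j % m with hidef
    have hii := hi j (by simp [Finset.mem_Icc]; omega)
    simp only [Finset.mem_Icc] at hii
    have hdm : a * j = m * (a * j / m) + i := (Nat.div_add_mod (a * j) m).symm
    have hcot : Real.cot (π * (j * a) / m) = Real.cot (π * i / m) := by
      set n : ℕ := a * j / m with hn
      have hcast : ((j * a : ℕ) : ℝ) = (m : ℝ) * (n : ℝ) + (i : ℝ) := by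
        rw [mul_comm j a]; exact_mod_cast congrArg (Nat.cast : ℕ → ℝ) hdm
      have harg : π * (j * a) / m = π * i / m + ((n : ℤ) : ℝ) * π := by
        push_cast at hcast ⊢
        field_simp
        linear_combination hcast
      rw [harg, cot_add_int_mul_pi']
    have hbi : b * i % m = j := by
      have heq : b * (a * j % m) % m = j % m := hmod j
      rwa [Nat.mod_eq_of_lt hjm] at heq
    have hdm2 : i * b = m * (b * i / m) + j := by
      rw [mul_comm i b, ← hbi]; exact (Nat.div_add_mod (b * i) m).symm
    have hsin : Real.sin (2 * π * j / m) = Real.sin (2 * π * i * b / m) := by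
      set n2 : ℕ := b * i / m with hn2
      have hcast2 : ((i * b : ℕ) : ℝ) = (m : ℝ) * (n2 : ℝ) + (j : ℝ) := by
        exact_mod_cast congrArg (Nat.cast : ℕ → ℝ) hdm2
      have harg : 2 * π * i * b / m = 2 * π * j / m + ((n2 : ℤ) : ℝ) * (2 * π) := by
        push_cast at hcast2 ⊢
        field_simp
        linear_combination hcast2
      rw [harg, Real.sin_add_int_mul_two_pi]
    rw [hcot, hsin]

lemma exists_modInv (m a : ℕ) (hm : 2 ≤ m) (h : Nat.Coprime a m) :
    ∃ b, 1 ≤ b ∧ b ≤ m - 1 ∧ a * b ≡ 1 [MOD m] := by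
  haveI : NeZero m := ⟨by omega⟩
  haveI : Fact (1 < m) := ⟨by omega⟩
  set u := ZMod.unitOfCoprime a h with hu
  set b := ((u⁻¹ : (ZMod m)ˣ) : ZMod m).val with hbdef
  have hbcast : ((b : ℕ) : ZMod m) = ((u⁻¹ : (ZMod m)ˣ) : ZMod m) := by
    rw [hbdef, ZMod.natCast_val, ZMod.cast_id]
  have hmod : a * b ≡ 1 [MOD m] := by
    rw [← ZMod.natCast_eq_natCast_iff]
    push_cast
    rw [hbcast, ← ZMod.coe_unitOfCoprime a h, ← hu, ← Units.val_mul, mul_inv_cancel,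
      Units.val_one]
  refine ⟨b, ?_, ?_, hmod⟩
  · rcases Nat.eq_zero_or_pos b with h0 | h1
    · exfalso
      have : ((u⁻¹ : (ZMod m)ˣ) : ZMod m) = 0 := by rw [← hbcast, h0]; simp
      exact (u⁻¹).ne_zero this
    · exact h1
  · have := ZMod.val_lt ((u⁻¹ : (ZMod m)ˣ) : ZMod m)
    omega

lemma fsTerm_eval (m c b : ℕ) (hm : 2 ≤ m) (hb1 : 1 ≤ b) (hb2 : b ≤ m - 1)
    (hcb : c * b ≡ 1 [MOD m]) :
    fsTerm ((m * c : ℕ) : ℝ) m = 1 - 2 * b / m := by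
  have hm0 : (m : ℝ) ≠ 0 := Nat.cast_ne_zero.mpr (by omega)
  unfold fsTerm
  have key : ∀ j ∈ Finset.Icc 1 (m - 1),
      Real.cot (π * j * ((m * c : ℕ) : ℝ) / (m : ℝ) ^ 2) * Real.cot (π * j / m) *
        Real.sin (π * j / m) ^ 2 =
        Real.cot (π * (j * c) / m) * Real.sin (2 * π * j / m) / 2 := by
    intro j hj
    simp only [Finset.mem_Icc] at hj
    have hs : Real.sin (π * j / m) ≠ 0 := ne_of_gt (sin_pos_of_Icc' m j hm hj.1 hj.2)
    have harg : π * j * ((m * c : ℕ) : ℝ) / (m : ℝ) ^ 2 = π * (j * c : ℕ) / m := by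
      push_cast; field_simp
    rw [harg]
    have h2 : Real.sin (2 * π * j / m) = 2 * Real.sin (π * j / m) * Real.cos (π * j / m) := by
      rw [show 2 * π * (j : ℝ) / m = 2 * (π * j / m) by ring, Real.sin_two_mul]
    rw [h2, Real.cot_eq_cos_div_sin (π * j / m)]
    have : (((j * c : ℕ) : ℝ)) = (j : ℝ) * c := by push_cast; ring
    rw [this]
    field_simp
    try ring
  rw [Finset.sum_congr rfl key, ← Finset.sum_div]
  rw [show ∀ x : ℝ, 2 / (m : ℝ) * (x / 2) = x / m by intro x; field_simp]
  rw [sum_cot_reindex' m c b hm hb1 hb2 hcb]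
  field_simp

/-- For coprime integers `p, q ≥ 2` and `k ≥ 1`, setting `r := pqk + 1` (so that `p`, `q`, `r`
are pairwise coprime and `r ≥ 2`), one has `R(p, q, r) = -1`. -/
theorem stmt_17 (p q k : ℕ) (hp : 2 ≤ p) (hq : 2 ≤ q) (hpq : Nat.Coprime p q)
    (hk : 1 ≤ k) (r : ℕ) (hr : r = p * q * k + 1) :
    2 / ((p * q * r : ℕ) : ℝ) +
      fsTerm ((p * q * r : ℕ) : ℝ) p +
      fsTerm ((p * q * r : ℕ) : ℝ) q +
      fsTerm ((p * q * r : ℕ) : ℝ) r = -1 := by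
  have hpq4 : 4 ≤ p * q := by calc 4 = 2 * 2 := rfl
                                   _ ≤ p * q := Nat.mul_le_mul hp hq
  have hkr : k < r := by
    have : k ≤ p * q * k := Nat.le_mul_of_pos_left k (by omega)
    omega
  have hr2 : 2 ≤ r := by
    have : 1 * 1 ≤ p * q * k := by
      apply Nat.mul_le_mul (by omega) hk
    omega
  -- p-term
  obtain ⟨bp, hbp1, hbp2, hbp⟩ := exists_modInv p q hp hpq.symm
  have hr1p : r ≡ 1 [MOD p] := by
    rw [hr]
    show (p * q * k + 1) % p = 1 % p
    rw [show p * q * k + 1 = 1 + p * (q * k) by ring, Nat.add_mul_mod_self_left]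
  have hcbp : (q * r) * bp ≡ 1 [MOD p] := by
    calc (q * r) * bp = (q * bp) * r := by ring
      _ ≡ 1 * 1 [MOD p] := hbp.mul (hr1p)
      _ = 1 := by ring
  -- q-term
  obtain ⟨bq, hbq1, hbq2, hbq⟩ := exists_modInv q p hq hpq
  have hr1q : r ≡ 1 [MOD q] := by
    rw [hr]
    show (p * q * k + 1) % q = 1 % q
    rw [show p * q * k + 1 = 1 + q * (p * k) by ring, Nat.add_mul_mod_self_left]
  have hcbq : (p * r) * bq ≡ 1 [MOD q] := by
    calc (p * r) * bq = (p * bq) * r := by ring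
      _ ≡ 1 * 1 [MOD q] := hbq.mul (hr1q)
      _ = 1 := by ring
  -- r-term
  have hprod : (p * q) * (r - k) = r * (p * q - 1) + 1 := by
    have h1 : k ≤ r := by omega
    have h2 : 1 ≤ p * q := by omega
    zify [h1, h2]
    have hri : (r : ℤ) = p * q * k + 1 := by exact_mod_cast congrArg (Nat.cast : ℕ → ℤ) hr
    linear_combination hri
  have hcbr : (p * q) * (r - k) ≡ 1 [MOD r] := by
    rw [hprod]
    show (r * (p * q - 1) + 1) % r = 1 % r
    rw [show r * (p * q - 1) + 1 = 1 + r * (p * q - 1) by ring, Nat.add_mul_mod_self_left]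
  -- evaluate the three terms
  have e1 : fsTerm ((p * q * r : ℕ) : ℝ) p = 1 - 2 * bp / p := by
    rw [show p * q * r = p * (q * r) by ring]
    exact fsTerm_eval p (q * r) bp hp hbp1 hbp2 hcbp
  have e2 : fsTerm ((p * q * r : ℕ) : ℝ) q = 1 - 2 * bq / q := by
    rw [show p * q * r = q * (p * r) by ring]
    exact fsTerm_eval q (p * r) bq hq hbq1 hbq2 hcbq
  have e3 : fsTerm ((p * q * r : ℕ) : ℝ) r = 1 - 2 * (r - k : ℕ) / r := by
    rw [show p * q * r = r * (p * q) by ring]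
    exact fsTerm_eval r (p * q) (r - k) hr2 (by omega) (by omega) hcbr
  -- the key arithmetic identity q*bp + p*bq = p*q + 1
  have hkey : q * bp + p * bq = p * q + 1 := by
    set s := q * bp + p * bq with hs
    have hs1 : 1 ≤ s := by
      have : 1 ≤ q * bp := Nat.one_le_iff_ne_zero.mpr (by positivity)
      omega
    have hmodp : s ≡ 1 [MOD p] := by
      calc s = q * bp + p * bq := rfl
        _ ≡ 1 + 0 [MOD p] := by
            exact hbp.add ((Nat.modEq_zero_iff_dvd).mpr ⟨bq, rfl⟩)
        _ = 1 := by ring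
    have hmodq : s ≡ 1 [MOD q] := by
      calc s = p * bq + q * bp := by ring
        _ ≡ 1 + 0 [MOD q] := by
            exact hbq.add ((Nat.modEq_zero_iff_dvd).mpr ⟨bp, rfl⟩)
        _ = 1 := by ring
    have hmodpq : s ≡ 1 [MOD p * q] :=
      (Nat.modEq_and_modEq_iff_modEq_mul hpq).mp ⟨hmodp, hmodq⟩
    have hdvd : (p * q) ∣ (s - 1) := (Nat.modEq_iff_dvd' hs1).mp hmodpq.symm
    obtain ⟨t, ht⟩ := hdvd
    have hts : s = p * q * t + 1 := by omega
    have h1 : q * bp + q ≤ q * p := by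
      calc q * bp + q = q * (bp + 1) := by ring
        _ ≤ q * p := Nat.mul_le_mul_left q (by omega)
    have h2 : p * bq + p ≤ p * q := by
      calc p * bq + p = p * (bq + 1) := by ring
        _ ≤ p * q := Nat.mul_le_mul_left p (by omega)
    have hqp : q * p = p * q := by ring
    have hl1 : q * 1 ≤ q * bp := Nat.mul_le_mul_left q hbp1
    have hl2 : p * 1 ≤ p * bq := Nat.mul_le_mul_left p hbq1
    have ht2 : t < 2 := by
      by_contra hcon
      push_neg at hcon
      have : p * q * 2 ≤ p * q * t := Nat.mul_le_mul_left _ hcon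
      omega
    have ht1 : 1 ≤ t := by
      rcases Nat.eq_zero_or_pos t with rfl | h
      · omega
      · exact h
    have htone : t = 1 := by omega
    rw [htone, mul_one] at hts
    omega
  -- final computation
  rw [e1, e2, e3]
  have hp0 : (p : ℝ) ≠ 0 := Nat.cast_ne_zero.mpr (by omega)
  have hq0 : (q : ℝ) ≠ 0 := Nat.cast_ne_zero.mpr (by omega)
  have hr0 : (r : ℝ) ≠ 0 := Nat.cast_ne_zero.mpr (by omega)
  have hrk : ((r - k : ℕ) : ℝ) = (r : ℝ) - k := by
    rw [Nat.cast_sub (by omega)]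
  have hkeyR : (q : ℝ) * bp + (p : ℝ) * bq = (p : ℝ) * q + 1 := by
    exact_mod_cast congrArg (Nat.cast : ℕ → ℝ) hkey
  have hrR : (r : ℝ) = (p : ℝ) * q * k + 1 := by
    exact_mod_cast congrArg (Nat.cast : ℕ → ℝ) hr
  rw [hrk]
  push_cast
  field_simp
  linear_combination (-2*(r:ℝ)) * hkeyR - 2 * hrR
end
end
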